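/- arXiv:1102.0362 — 2 statements merged into one kernel-verified Lean document; each statement's English description precedes it below -/
import Mathlib

section
/- Suppose that for every natural number n, U(2^n) is a K-subspace of A(2^n) such that A(2^n)U(2^n) + U(2^n)A(2^n) ⊆ U(2^{n+1}). Then for all natural numbers p > m and every integer q with 0 ≤ q < 2^{p−m}, one has A(q·2^m)·U(2^m)·A(2^p − (q+1)·2^m) ⊆ U(2^p). -/
noncomputable section

/-- The free associative algebra `K⟨x,y⟩` on two generators. -/
abbrev FA (K : Type*) [Field K] := FreeAlgebra K (Fin 2)

/-- The element of `K⟨x,y⟩` given by a word (a list of letters). -/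
def wordOf (K : Type*) [Field K] (l : List (Fin 2)) : FA K :=
  (l.map (FreeAlgebra.ι K)).prod

/-- `a` is a word of length `n` over the two generators. -/
def IsWord (K : Type*) [Field K] (n : ℕ) (a : FA K) : Prop :=
  ∃ l : List (Fin 2), l.length = n ∧ a = wordOf K l

/-- `A(n)`: the span of all words of length `n`. -/
def Aspan (K : Type*) [Field K] (n : ℕ) : Submodule K (FA K) :=
  Submodule.span K {a | IsWord K n a}

lemma wordOf_append (K : Type*) [Field K] (l1 l2 : List (Fin 2)) :
    wordOf K (l1 ++ l2) = wordOf K l1 * wordOf K l2 := by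
  simp [wordOf]

lemma Aspan_mul (K : Type*) [Field K] (a b : ℕ) :
    Aspan K a * Aspan K b = Aspan K (a + b) := by
  apply le_antisymm
  · rw [Aspan, Aspan, Aspan, Submodule.span_mul_span]
    apply Submodule.span_mono
    rintro x ⟨u, ⟨l1, h1, rfl⟩, v, ⟨l2, h2, rfl⟩, rfl⟩
    exact ⟨l1 ++ l2, by simp [h1, h2], (wordOf_append K l1 l2).symm⟩
  · rw [Aspan, Submodule.span_le]
    rintro x ⟨l, hl, rfl⟩
    have h1 : wordOf K (l.take a) ∈ Aspan K a :=
      Submodule.subset_span ⟨l.take a, by simp [hl], rfl⟩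
    have h2 : wordOf K (l.drop a) ∈ Aspan K b :=
      Submodule.subset_span ⟨l.drop a, by simp [hl], rfl⟩
    have := Submodule.mul_mem_mul h1 h2
    rwa [← wordOf_append, List.take_append_drop] at this

lemma Aspan_zero (K : Type*) [Field K] : Aspan K 0 = 1 := by
  rw [Aspan, Submodule.one_eq_span]
  congr 1
  ext x
  simp [IsWord, wordOf, List.length_eq_zero_iff]

/-- **Equation (13).** If `U(2^n) ⊆ A(2^n)` satisfies
`A(2^n)U(2^n) + U(2^n)A(2^n) ⊆ U(2^{n+1})` for all `n`, then for `p > m` and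
`0 ≤ q < 2^{p-m}` one has `A(q·2^m)·U(2^m)·A(2^p - (q+1)·2^m) ⊆ U(2^p)`. -/
theorem equation_13 {K : Type*} [Field K] (U : ℕ → Submodule K (FA K))
    (hU_le : ∀ n, U n ≤ Aspan K (2 ^ n))
    (hU_mul : ∀ n, Aspan K (2 ^ n) * U n ⊔ U n * Aspan K (2 ^ n) ≤ U (n + 1)) :
    ∀ p m q : ℕ, m < p → q < 2 ^ (p - m) →
      Aspan K (q * 2 ^ m) * U m * Aspan K (2 ^ p - (q + 1) * 2 ^ m) ≤ U p := by
  intro p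
  induction p with
  | zero => intro m q hm; omega
  | succ p ih =>
    intro m q hmp hq
    rcases Nat.lt_or_ge m p with hmp' | hmp'
    · -- m < p : inductive step
      have hsub : p + 1 - m = (p - m) + 1 := by omega
      have hpow : 2 ^ (p - m) * 2 ^ m = 2 ^ p := by
        rw [← pow_add, Nat.sub_add_cancel hmp'.le]
      have hpow1 : 2 ^ (p + 1) = 2 ^ p + 2 ^ p := by rw [pow_succ]; ring
      rw [hsub, pow_succ] at hq
      rcases Nat.lt_or_ge q (2 ^ (p - m)) with hql | hqr
      · -- left half
        have hle : (q + 1) * 2 ^ m ≤ 2 ^ p := by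
          calc (q + 1) * 2 ^ m ≤ 2 ^ (p - m) * 2 ^ m :=
              Nat.mul_le_mul_right _ (by omega)
            _ = 2 ^ p := hpow
        have e : 2 ^ (p + 1) - (q + 1) * 2 ^ m
            = (2 ^ p - (q + 1) * 2 ^ m) + 2 ^ p := by omega
        rw [e, ← Aspan_mul, ← mul_assoc]
        calc Aspan K (q * 2 ^ m) * U m * Aspan K (2 ^ p - (q + 1) * 2 ^ m)
              * Aspan K (2 ^ p)
            ≤ U p * Aspan K (2 ^ p) :=
              mul_le_mul' (ih m q hmp' hql) le_rfl
          _ ≤ U (p + 1) := le_trans le_sup_right (hU_mul p)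
      · -- right half
        set q' := q - 2 ^ (p - m) with hq'def
        have hq'lt : q' < 2 ^ (p - m) := by omega
        have hqeq : q = 2 ^ (p - m) + q' := by omega
        have e1 : q * 2 ^ m = 2 ^ p + q' * 2 ^ m := by
          rw [hqeq, Nat.add_mul, hpow]
        have hle' : (q' + 1) * 2 ^ m ≤ 2 ^ p := by
          calc (q' + 1) * 2 ^ m ≤ 2 ^ (p - m) * 2 ^ m :=
              Nat.mul_le_mul_right _ (by omega)
            _ = 2 ^ p := hpow
        have e2 : 2 ^ (p + 1) - (q + 1) * 2 ^ m = 2 ^ p - (q' + 1) * 2 ^ m := by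
          have : (q + 1) * 2 ^ m = 2 ^ p + (q' + 1) * 2 ^ m := by
            have : q + 1 = 2 ^ (p - m) + (q' + 1) := by omega
            rw [this, Nat.add_mul, hpow]
          omega
        rw [e1, e2, ← Aspan_mul, mul_assoc, mul_assoc]
        calc Aspan K (2 ^ p) * (Aspan K (q' * 2 ^ m) *
              (U m * Aspan K (2 ^ p - (q' + 1) * 2 ^ m)))
            ≤ Aspan K (2 ^ p) * U p := by
              refine mul_le_mul' le_rfl ?_
              rw [← mul_assoc]
              exact ih m q' hmp' hq'lt
          _ ≤ U (p + 1) := le_trans le_sup_left (hU_mul p)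
    · -- base case: p = m
      obtain rfl : m = p := by omega
      have hq2 : q < 2 := by
        have h1 : m + 1 - m = 1 := by omega
        rw [h1, pow_one] at hq; exact hq
      have hpow1 : 2 ^ (m + 1) = 2 ^ m + 2 ^ m := by rw [pow_succ]; ring
      interval_cases q
      · have e0 : 0 * 2 ^ m = 0 := by ring
        have e1 : 2 ^ (m + 1) - (0 + 1) * 2 ^ m = 2 ^ m := by omega
        rw [e0, e1, Aspan_zero, one_mul]
        exact le_trans le_sup_right (hU_mul m)
      · have e0 : 1 * 2 ^ m = 2 ^ m := by ring
        have e1 : 2 ^ (m + 1) - (1 + 1) * 2 ^ m = 0 := by omega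
        rw [e0, e1, Aspan_zero, mul_one]
        exact le_trans le_sup_left (hU_mul m)

end
end

section
/- Let K be a field, let n, p, d be positive natural numbers with n ≥ p, and let W be a d-dimensional K-subspace of A = K⟨x,y⟩ spanned by d nonempty words over x and y, each of length at most p. Then there is a K-subspace Y of A(n) whose dimension is at most (n+1)^d·(2p^2)·4^p such that for all sufficiently large natural numbers j, the two-sided ideal of A generated by all j-th powers of elements of W is contained in Σ_{k=0}^{∞} A(kn)·Y·A. -/
open Module

noncomputable section

namespace L41

variable {K : Type*} [Field K]

lemma wordOf_append (a b : List (Fin 2)) :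
    wordOf K (a ++ b) = wordOf K a * wordOf K b := by
  simp [wordOf]

lemma wordOf_nil : wordOf K [] = 1 := rfl

lemma wordOf_mem_Aspan (lu : List (Fin 2)) : wordOf K lu ∈ Aspan K lu.length :=
  Submodule.subset_span ⟨lu, rfl, rfl⟩

lemma span_words_top :
    Submodule.span K {a : FA K | ∃ lu, a = wordOf K lu} = ⊤ := by
  rw [eq_top_iff]
  rintro a -
  induction a using FreeAlgebra.induction with
  | grade0 r =>
      rw [Algebra.algebraMap_eq_smul_one]
      exact Submodule.smul_mem _ _ (Submodule.subset_span ⟨[], rfl⟩)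
  | grade1 i => exact Submodule.subset_span ⟨[i], by simp [wordOf]⟩
  | add a b ha hb => exact Submodule.add_mem _ ha hb
  | mul a b ha hb =>
      have h2 : Submodule.span K {a : FA K | ∃ lu, a = wordOf K lu} *
          Submodule.span K {a : FA K | ∃ lu, a = wordOf K lu} ≤
          Submodule.span K {a : FA K | ∃ lu, a = wordOf K lu} := by
        rw [Submodule.span_mul_span]
        apply Submodule.span_mono
        rintro x ⟨y, ⟨ly, rfl⟩, z, ⟨lz, rfl⟩, rfl⟩
        exact ⟨ly ++ lz, (wordOf_append ly lz).symm⟩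
      exact h2 (Submodule.mul_mem_mul ha hb)

variable {d : ℕ} (l : Fin d → List (Fin 2))

/-- product of the words indexed by `s` -/
def P (s : List (Fin d)) : FA K := wordOf K (s.map l).flatten

/-- total letter-length of a multiset of word indices -/
def wt (μ : Multiset (Fin d)) : ℕ := (μ.map fun i => (l i).length).sum

lemma wt_coe (s : List (Fin d)) : wt l (↑s) = (s.map fun i => (l i).length).sum := by
  simp [wt]

lemma wt_cons (i : Fin d) (μ : Multiset (Fin d)) :
    wt l (i ::ₘ μ) = (l i).length + wt l μ := by simp [wt]

lemma wt_zero : wt l 0 = 0 := rfl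

lemma len_flatten (s : List (Fin d)) : ((s.map l).flatten).length = wt l ↑s := by
  simp [wt_coe, List.length_flatten, List.map_map]
  rfl

lemma P_nil : P (K := K) l [] = 1 := rfl

lemma P_cons (i : Fin d) (s : List (Fin d)) :
    P (K := K) l (i :: s) = wordOf K (l i) * P l s := by
  simp [P, wordOf_append]

lemma P_concat (s : List (Fin d)) (i : Fin d) :
    P (K := K) l (s ++ [i]) = P l s * wordOf K (l i) := by
  simp [P, wordOf_append]


open Finset in
/-- sum of all products of words whose index-list has content `μ`, over sequences of length `j` -/
def SymF (j : ℕ) (μ : Multiset (Fin d)) : FA K :=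
  ∑ f ∈ Finset.univ.filter (fun f : Fin j → Fin d => (↑(List.ofFn f) : Multiset (Fin d)) = μ),
    P l (List.ofFn f)

def Sym (μ : Multiset (Fin d)) : FA K := SymF l (Multiset.card μ) μ

lemma cons_eq_iff (i : Fin d) (x μ : Multiset (Fin d)) :
    i ::ₘ x = μ ↔ i ∈ μ ∧ x = μ.erase i := by
  constructor
  · rintro rfl; exact ⟨Multiset.mem_cons_self i x, (Multiset.erase_cons_head i x).symm⟩
  · rintro ⟨h1, rfl⟩; exact Multiset.cons_erase h1

lemma SymF_succ_left (j : ℕ) (μ : Multiset (Fin d)) :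
    SymF (K := K) l (j+1) μ
      = ∑ i ∈ μ.toFinset, wordOf K (l i) * SymF l j (μ.erase i) := by
  classical
  rw [SymF, Finset.sum_filter, ← Equiv.sum_comp (Fin.consEquiv (fun _ => Fin d)),
    Fintype.sum_prod_type]
  have h1 : ∀ (i : Fin d) (g : Fin j → Fin d),
      List.ofFn (Fin.cons i g : Fin (j+1) → Fin d) = i :: List.ofFn g := by
    intro i g; simp [List.ofFn_succ]
  have : ∀ i : Fin d,
      (∑ g : Fin j → Fin d,
        if (↑(List.ofFn ((Fin.consEquiv (fun _ => Fin d)) (i, g))) : Multiset (Fin d)) = μ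
        then P (K := K) l (List.ofFn ((Fin.consEquiv (fun _ => Fin d)) (i, g))) else 0)
      = if i ∈ μ then wordOf K (l i) * SymF l j (μ.erase i) else 0 := by
    intro i
    have h2 : ∀ g : Fin j → Fin d,
        (Fin.consEquiv (fun _ => Fin d)) (i, g) = (Fin.cons i g : Fin (j+1) → Fin d) := fun _ => rfl
    simp only [h2, h1]
    by_cases hi : i ∈ μ
    · simp only [hi, if_true, SymF, Finset.sum_filter, Finset.mul_sum, mul_ite, mul_zero]
      apply Finset.sum_congr rfl
      intro g _
      have : (↑(i :: List.ofFn g) : Multiset (Fin d)) = μ ↔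
          (↑(List.ofFn g) : Multiset (Fin d)) = μ.erase i := by
        rw [← Multiset.cons_coe, cons_eq_iff]
        simp [hi]
      rw [P_cons]
      simp only [this]
    · simp only [hi, if_false]
      apply Finset.sum_eq_zero
      intro g _
      rw [if_neg]
      intro hc
      rw [← Multiset.cons_coe, cons_eq_iff] at hc
      exact hi hc.1
  rw [Finset.sum_congr rfl (fun i _ => this i)]
  simp only [← Multiset.mem_toFinset]
  rw [Finset.sum_ite_mem, Finset.univ_inter]

lemma SymF_succ_right (j : ℕ) (μ : Multiset (Fin d)) :
    SymF (K := K) l (j+1) μ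
      = ∑ i ∈ μ.toFinset, SymF l j (μ.erase i) * wordOf K (l i) := by
  classical
  rw [SymF, Finset.sum_filter, ← Equiv.sum_comp (Fin.snocEquiv (fun _ => Fin d)),
    Fintype.sum_prod_type]
  have h1 : ∀ (i : Fin d) (g : Fin j → Fin d),
      List.ofFn (Fin.snoc g i : Fin (j+1) → Fin d) = List.ofFn g ++ [i] := by
    intro i g; rw [List.ofFn_succ']; simp [Fin.snoc_castSucc]
  have hco : ∀ (s : List (Fin d)) (x : Fin d),
      (↑(s ++ [x]) : Multiset (Fin d)) = x ::ₘ ↑s := by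
    intro s x
    have h := Multiset.cons_coe x s
    rw [h, Multiset.coe_eq_coe]
    exact List.perm_append_singleton x s
  have : ∀ i : Fin d,
      (∑ g : Fin j → Fin d,
        if (↑(List.ofFn ((Fin.snocEquiv (fun _ => Fin d)) (i, g))) : Multiset (Fin d)) = μ
        then P (K := K) l (List.ofFn ((Fin.snocEquiv (fun _ => Fin d)) (i, g))) else 0)
      = if i ∈ μ then SymF l j (μ.erase i) * wordOf K (l i) else 0 := by
    intro i
    have h2 : ∀ g : Fin j → Fin d,
        (Fin.snocEquiv (fun _ => Fin d)) (i, g) = (Fin.snoc g i : Fin (j+1) → Fin d) := fun _ => rfl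
    simp only [h2, h1]
    by_cases hi : i ∈ μ
    · simp only [hi, if_true, SymF, Finset.sum_filter, Finset.sum_mul, ite_mul, zero_mul]
      apply Finset.sum_congr rfl
      intro g _
      have : (↑(List.ofFn g ++ [i]) : Multiset (Fin d)) = μ ↔
          (↑(List.ofFn g) : Multiset (Fin d)) = μ.erase i := by
        rw [hco, cons_eq_iff]
        simp [hi]
      rw [P_concat]
      simp only [this]
    · simp only [hi, if_false]
      apply Finset.sum_eq_zero
      intro g _
      rw [if_neg]
      intro hc
      rw [hco, cons_eq_iff] at hc
      exact hi hc.1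
  rw [Finset.sum_congr rfl (fun i _ => this i)]
  simp only [← Multiset.mem_toFinset]
  rw [Finset.sum_ite_mem, Finset.univ_inter]

lemma Sym_peel_left {μ : Multiset (Fin d)} (hμ : μ ≠ 0) :
    Sym (K := K) l μ = ∑ i ∈ μ.toFinset, wordOf K (l i) * Sym l (μ.erase i) := by
  obtain ⟨j, hj⟩ : ∃ j, Multiset.card μ = j + 1 :=
    ⟨Multiset.card μ - 1, by
      have := Multiset.card_pos.mpr hμ; omega⟩
  rw [Sym, hj, SymF_succ_left]
  apply Finset.sum_congr rfl
  intro i hi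
  rw [Sym, Multiset.card_erase_of_mem (Multiset.mem_toFinset.mp hi), hj]
  rfl

lemma Sym_peel_right {μ : Multiset (Fin d)} (hμ : μ ≠ 0) :
    Sym (K := K) l μ = ∑ i ∈ μ.toFinset, Sym l (μ.erase i) * wordOf K (l i) := by
  obtain ⟨j, hj⟩ : ∃ j, Multiset.card μ = j + 1 :=
    ⟨Multiset.card μ - 1, by
      have := Multiset.card_pos.mpr hμ; omega⟩
  rw [Sym, hj, SymF_succ_right]
  apply Finset.sum_congr rfl
  intro i hi
  rw [Sym, Multiset.card_erase_of_mem (Multiset.mem_toFinset.mp hi), hj]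
  rfl

lemma mid_mem_Aspan (c e : List (Fin 2)) (μ : Multiset (Fin d)) :
    wordOf K c * Sym l μ * wordOf K e ∈ Aspan K (c.length + wt l μ + e.length) := by
  rw [Sym, SymF, Finset.mul_sum, Finset.sum_mul]
  apply Submodule.sum_mem
  intro f hf
  have hf' : (↑(List.ofFn f) : Multiset (Fin d)) = μ := (Finset.mem_filter.mp hf).2
  have : wordOf K c * P (K := K) l (List.ofFn f) * wordOf K e
      = wordOf K (c ++ ((List.ofFn f).map l).flatten ++ e) := by
    rw [wordOf_append, wordOf_append]; rfl
  rw [mul_assoc, ← mul_assoc, this]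
  have hlen : (c ++ ((List.ofFn f).map l).flatten ++ e).length
      = c.length + wt l μ + e.length := by
    rw [List.length_append, List.length_append, len_flatten, hf']
  exact hlen ▸ wordOf_mem_Aspan _


lemma pow_expand (α : Fin d → K) (j : ℕ) :
    (∑ i, α i • wordOf K (l i)) ^ j
      = ∑ f : Fin j → Fin d, (∏ t, α (f t)) • P l (List.ofFn f) := by
  induction j with
  | zero =>
      rw [pow_zero]
      rw [Fintype.sum_unique]
      simp [List.ofFn_zero, P_nil]
  | succ j ih =>
      rw [pow_succ']  -- y^(j+1) = y * y^j
      rw [ih, Finset.sum_mul]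
      rw [← Equiv.sum_comp (Fin.consEquiv (fun _ => Fin d)), Fintype.sum_prod_type]
      apply Finset.sum_congr rfl
      intro i _
      rw [Finset.mul_sum]
      apply Finset.sum_congr rfl
      intro g _
      have h2 : (Fin.consEquiv (fun _ => Fin d)) (i, g) = (Fin.cons i g : Fin (j+1) → Fin d) := rfl
      have h1 : List.ofFn (Fin.cons i g : Fin (j+1) → Fin d) = i :: List.ofFn g := by
        simp [List.ofFn_succ]
      rw [h2, h1, P_cons, smul_mul_smul_comm, Fin.prod_univ_succ]
      simp [Fin.cons_zero, Fin.cons_succ]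

lemma coeff_of_content (α : Fin d → K) {j : ℕ} (f : Fin j → Fin d) :
    (∏ t, α (f t)) = (((↑(List.ofFn f) : Multiset (Fin d))).map α).prod := by
  rw [Multiset.map_coe, Multiset.prod_coe, List.map_ofFn, List.prod_ofFn]
  rfl

lemma pow_expand_sym (α : Fin d → K) (j : ℕ) :
    (∑ i, α i • wordOf K (l i)) ^ j
      = ∑ μ ∈ Finset.univ.image
            (fun f : Fin j → Fin d => (↑(List.ofFn f) : Multiset (Fin d))),
          ((μ.map α).prod) • Sym l μ := by
  classical
  rw [pow_expand]
  rw [← Finset.sum_fiberwise_of_maps_to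
    (g := fun f : Fin j → Fin d => (↑(List.ofFn f) : Multiset (Fin d)))
    (fun f hf => Finset.mem_image_of_mem
      (fun f : Fin j → Fin d => (↑(List.ofFn f) : Multiset (Fin d))) hf)]
  apply Finset.sum_congr rfl
  intro μ hμ
  obtain ⟨f0, -, hf0⟩ := Finset.mem_image.mp hμ
  have hcard : Multiset.card μ = j := by
    rw [← hf0, Multiset.coe_card, List.length_ofFn]
  rw [Sym, hcard, SymF, Finset.smul_sum]
  apply Finset.sum_congr rfl
  intro f hf
  have hf' : (↑(List.ofFn f) : Multiset (Fin d)) = μ := (Finset.mem_filter.mp hf).2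
  rw [coeff_of_content, hf']

lemma wt_ge_card (hne : ∀ i, l i ≠ []) (μ : Multiset (Fin d)) :
    Multiset.card μ ≤ wt l μ := by
  induction μ using Multiset.induction with
  | empty => simp [wt_zero]
  | cons i μ ih =>
      rw [wt_cons, Multiset.card_cons]
      have : 1 ≤ (l i).length := List.length_pos_iff.mpr (hne i)
      omega


lemma claimB (n p : ℕ) (hpn : p ≤ n) (hlen : ∀ i, (l i).length ≤ p) (hne : ∀ i, l i ≠ [])
    (Y : Submodule K (FA K))
    (hY : ∀ (c e : List (Fin 2)) (ν : Multiset (Fin d)), c.length + 1 ≤ p → e.length ≤ p →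
        c.length + wt l ν + e.length = n → wordOf K c * Sym l ν * wordOf K e ∈ Y) :
    ∀ (m : ℕ) (μ : Multiset (Fin d)), wt l μ ≤ m → ∀ (c : List (Fin 2)), c.length + 1 ≤ p →
      n ≤ c.length + wt l μ → ∀ v : FA K,
      wordOf K c * Sym l μ * v ∈ Y * (⊤ : Submodule K (FA K)) := by
  intro m
  induction m with
  | zero =>
      intro μ hm c hc hcn v
      exfalso
      omega
  | succ m ih =>
      intro μ hm c hc hcn v
      have hμ0 : μ ≠ 0 := by
        intro h; subst h; rw [wt_zero] at hcn; omega
      rw [Sym_peel_right l hμ0, Finset.mul_sum, Finset.sum_mul]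
      apply Submodule.sum_mem
      intro i hi
      have him : i ∈ μ := Multiset.mem_toFinset.mp hi
      have hμi : i ::ₘ μ.erase i = μ := Multiset.cons_erase him
      have hwt : wt l μ = (l i).length + wt l (μ.erase i) := by
        conv_lhs => rw [← hμi]
        rw [wt_cons]
      have hip : 1 ≤ (l i).length := List.length_pos_iff.mpr (hne i)
      have hip2 : (l i).length ≤ p := hlen i
      by_cases hcase : n ≤ c.length + wt l (μ.erase i)
      · have := ih (μ.erase i) (by omega) c hc hcase (wordOf K (l i) * v)
        have heq : wordOf K c * Sym l (μ.erase i) * (wordOf K (l i) * v)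
            = wordOf K c * (Sym l (μ.erase i) * wordOf K (l i)) * v := by
          simp only [mul_assoc]
        rwa [heq] at this
      · set b : ℕ := n - c.length - wt l (μ.erase i) with hb
        have hb1 : 1 ≤ b := by omega
        have hble : b ≤ (l i).length := by omega
        have hsplit : l i = (l i).take b ++ (l i).drop b := (List.take_append_drop b (l i)).symm
        have hlt : ((l i).take b).length = b := by
          rw [List.length_take]; omega
        have hYmem : wordOf K c * Sym l (μ.erase i) * wordOf K ((l i).take b) ∈ Y :=
          hY c ((l i).take b) (μ.erase i) hc (by omega) (by omega)
        have hmm := Submodule.mul_mem_mul hYmem (Submodule.mem_top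
          (x := wordOf K ((l i).drop b) * v) (R := K))
        have heq : wordOf K c * Sym l (μ.erase i) * wordOf K ((l i).take b) *
              (wordOf K ((l i).drop b) * v)
            = wordOf K c * (Sym l (μ.erase i) * wordOf K (l i)) * v := by
          conv_rhs => rw [hsplit, wordOf_append]
          simp only [mul_assoc]
        rwa [heq] at hmm

lemma claimA (n p : ℕ) (hp : 0 < p) (hpn : p ≤ n)
    (hlen : ∀ i, (l i).length ≤ p) (hne : ∀ i, l i ≠ [])
    (Y : Submodule K (FA K))
    (hY : ∀ (c e : List (Fin 2)) (ν : Multiset (Fin d)), c.length + 1 ≤ p → e.length ≤ p →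
        c.length + wt l ν + e.length = n → wordOf K c * Sym l ν * wordOf K e ∈ Y) :
    ∀ (m t : ℕ), t ≤ m → t < n → ∀ (u : List (Fin 2)) (k : ℕ), u.length + t = k * n →
      ∀ (μ : Multiset (Fin d)), n + t ≤ wt l μ → ∀ v : FA K,
      wordOf K u * Sym l μ * v ∈
        ⨆ k : ℕ, Aspan K (k * n) * Y * (⊤ : Submodule K (FA K)) := by
  have base : ∀ (u : List (Fin 2)) (k : ℕ), u.length = k * n →
      ∀ (μ : Multiset (Fin d)), n ≤ wt l μ → ∀ v : FA K,
      wordOf K u * Sym l μ * v ∈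
        ⨆ k : ℕ, Aspan K (k * n) * Y * (⊤ : Submodule K (FA K)) := by
    intro u k hk μ hμ v
    have hz : Sym l μ * v ∈ Y * (⊤ : Submodule K (FA K)) := by
      have := claimB l n p hpn hlen hne Y hY (wt l μ) μ le_rfl []
        (by simp; omega) (by simpa using hμ) v
      rwa [wordOf_nil, one_mul] at this
    have hu : wordOf K u ∈ Aspan K (k * n) := hk ▸ wordOf_mem_Aspan u
    have hmm := Submodule.mul_mem_mul hu hz
    rw [← mul_assoc (Aspan K (k * n)) Y ⊤] at hmm
    apply Submodule.mem_iSup_of_mem k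
    rwa [mul_assoc (wordOf K u)]
  intro m
  induction m with
  | zero =>
      intro t ht htn u k hk μ hμ v
      have ht0 : t = 0 := by omega
      subst ht0
      exact base u k (by omega) μ (by omega) v
  | succ m ih =>
      intro t ht htn u k hk μ hμ v
      by_cases ht0 : t = 0
      · subst ht0
        exact base u k (by omega) μ (by omega) v
      · have hμ0 : μ ≠ 0 := by
          intro h; subst h; rw [wt_zero] at hμ; omega
        rw [Sym_peel_left l hμ0, Finset.mul_sum, Finset.sum_mul]
        apply Submodule.sum_mem
        intro i hi
        have him : i ∈ μ := Multiset.mem_toFinset.mp hi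
        have hμi : i ::ₘ μ.erase i = μ := Multiset.cons_erase him
        have hwt : wt l μ = (l i).length + wt l (μ.erase i) := by
          conv_lhs => rw [← hμi]
          rw [wt_cons]
        have hip : 1 ≤ (l i).length := List.length_pos_iff.mpr (hne i)
        have hip2 : (l i).length ≤ p := hlen i
        by_cases hcase : (l i).length ≤ t
        · have := ih (t - (l i).length) (by omega) (by omega) (u ++ l i) k
            (by rw [List.length_append]; omega) (μ.erase i) (by omega) v
          have heq : wordOf K (u ++ l i) * Sym l (μ.erase i) * v
              = wordOf K u * (wordOf K (l i) * Sym l (μ.erase i)) * v := by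
            rw [wordOf_append]
            simp only [mul_assoc]
          rwa [heq] at this
        · -- the word w i straddles the block boundary
          set c1 := (l i).take t with hc1
          set c2 := (l i).drop t with hc2
          have hlc1 : c1.length = t := by
            rw [hc1, List.length_take]; omega
          have hlc2 : c2.length = (l i).length - t := by
            rw [hc2, List.length_drop]
          have hsplit : l i = c1 ++ c2 := (List.take_append_drop t (l i)).symm
          have hz : wordOf K c2 * Sym l (μ.erase i) * v ∈ Y * (⊤ : Submodule K (FA K)) :=
            claimB l n p hpn hlen hne Y hY (wt l (μ.erase i)) (μ.erase i) le_rfl c2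
              (by omega) (by omega) v
          have hu : wordOf K (u ++ c1) ∈ Aspan K (k * n) := by
            have : (u ++ c1).length = k * n := by
              rw [List.length_append]; omega
            exact this ▸ wordOf_mem_Aspan _
          have hmm := Submodule.mul_mem_mul hu hz
          rw [← mul_assoc (Aspan K (k * n)) Y ⊤] at hmm
          apply Submodule.mem_iSup_of_mem k
          have heq : wordOf K (u ++ c1) * (wordOf K c2 * Sym l (μ.erase i) * v)
              = wordOf K u * (wordOf K (l i) * Sym l (μ.erase i)) * v := by
            conv_rhs => rw [hsplit, wordOf_append]
            rw [wordOf_append]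
            simp only [mul_assoc]
          rwa [heq] at hmm


/-- multiset from a vector of counts -/
def mcount (n : ℕ) (m : Fin d → Fin (n+1)) : Multiset (Fin d) :=
  ∑ i : Fin d, (m i : ℕ) • ({i} : Multiset (Fin d))

lemma mcount_count (n : ℕ) (ν : Multiset (Fin d)) (h : ∀ i, ν.count i < n + 1) :
    mcount n (fun i => ⟨ν.count i, h i⟩) = ν := by
  classical
  rw [mcount]
  conv_rhs => rw [← Multiset.toFinset_sum_count_nsmul_eq ν]
  refine (Finset.sum_subset (Finset.subset_univ _) (fun x _ hx => ?_)).symm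
  have h0 : Multiset.count x ν = 0 :=
    Multiset.count_eq_zero.mpr (fun h => hx (Multiset.mem_toFinset.mpr h))
  simp [h0]

/-- the generators of `Y`, indexed by a finite type -/
def Fgen (n p : ℕ) (x : (Σ k : Fin p, List.Vector (Fin 2) k) ×
    (Σ k : Fin (p+1), List.Vector (Fin 2) k) × (Fin d → Fin (n+1))) : FA K :=
  if x.1.2.toList.length + wt l (mcount n x.2.2) + x.2.1.2.toList.length = n
  then wordOf K x.1.2.toList * Sym l (mcount n x.2.2) * wordOf K x.2.1.2.toList
  else 0

lemma Fgen_mem_Aspan (n p : ℕ) (x) : Fgen (K := K) l n p x ∈ Aspan K n := by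
  rw [Fgen]
  split_ifs with h
  · have := mid_mem_Aspan (K := K) l x.1.2.toList x.2.1.2.toList (mcount n x.2.2)
    rwa [h] at this
  · exact Submodule.zero_mem _

lemma Fgen_covers (n p : ℕ) (hne : ∀ i, l i ≠ []) (c e : List (Fin 2)) (ν : Multiset (Fin d))
    (hc : c.length + 1 ≤ p) (he : e.length ≤ p)
    (hsum : c.length + wt l ν + e.length = n) :
    wordOf K c * Sym l ν * wordOf K e ∈ Set.range (Fgen (K := K) l n p) := by
  have hwt : wt l ν ≤ n := by omega
  have hcard : Multiset.card ν ≤ n := le_trans (wt_ge_card l hne ν) hwt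
  have hcnt : ∀ i, ν.count i < n + 1 := fun i =>
    lt_of_le_of_lt (le_trans (Multiset.count_le_card i ν) hcard) (Nat.lt_succ_self n)
  refine ⟨(⟨⟨c.length, by omega⟩, ⟨c, rfl⟩⟩,
          ⟨⟨e.length, by omega⟩, ⟨e, rfl⟩⟩,
          fun i => ⟨ν.count i, hcnt i⟩), ?_⟩
  rw [Fgen]
  simp only [List.Vector.toList_mk]
  rw [mcount_count n ν hcnt]; exact if_pos hsum

lemma sum_two_pow_le (m : ℕ) : (∑ k : Fin m, 2 ^ (k : ℕ)) ≤ 2 ^ m := by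
  rw [Fin.sum_univ_eq_sum_range]
  have : ∑ k ∈ Finset.range m, 2 ^ k < 2 ^ m := by
    induction m with
    | zero => simp
    | succ m ih => rw [Finset.sum_range_succ, pow_succ]; omega
  omega

end L41

open L41

/-- **Lemma 4.1.** Let `W` be a `d`-dimensional subspace of `K⟨x,y⟩` spanned by `d`
nonempty words of length at most `p`. Then there is a subspace `Y ⊆ A(n)` of dimension
at most `(n+1)^d·(2p²)·4^p` such that for all sufficiently large `j`, the two-sided
ideal generated by all `j`-th powers of elements of `W` is contained in
`Σ_{k=0}^∞ A(kn)·Y·A`. -/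
theorem lemma_4_1 {K : Type*} [Field K] (n p d : ℕ)
    (hn : 0 < n) (hp : 0 < p) (hd : 0 < d) (hpn : p ≤ n)
    (w : Fin d → FA K)
    (hword : ∀ i, ∃ l : List (Fin 2), l ≠ [] ∧ l.length ≤ p ∧ w i = wordOf K l)
    (hind : LinearIndependent K w) :
    ∃ Y : Submodule K (FA K), Y ≤ Aspan K n ∧
      finrank K Y ≤ (n + 1) ^ d * (2 * p ^ 2) * 4 ^ p ∧
      ∃ N : ℕ, ∀ j ≥ N,
        Submodule.span K {a : FA K | ∃ u v : FA K,
            ∃ y ∈ Submodule.span K (Set.range w), a = u * y ^ j * v}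
          ≤ ⨆ k : ℕ, Aspan K (k * n) * Y * (⊤ : Submodule K (FA K)) := by
  classical
  choose ll hne hlen hw using hword
  set Y : Submodule K (FA K) := Submodule.span K (Set.range (Fgen (K := K) ll n p)) with hYdef
  have hY : ∀ (c e : List (Fin 2)) (ν : Multiset (Fin d)), c.length + 1 ≤ p → e.length ≤ p →
      c.length + wt ll ν + e.length = n → wordOf K c * Sym ll ν * wordOf K e ∈ Y :=
    fun c e ν hc he hsum =>
      Submodule.subset_span (Fgen_covers ll n p hne c e ν hc he hsum)
  refine ⟨Y, ?_, ?_, 2 * n, ?_⟩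
  · -- Y ≤ Aspan n
    rw [hYdef, Submodule.span_le]
    rintro a ⟨x, rfl⟩
    exact Fgen_mem_Aspan ll n p x
  · -- dimension bound
    have h1 : finrank K Y ≤ (Set.range (Fgen (K := K) ll n p)).toFinset.card :=
      finrank_span_le_card _
    have h2 : (Set.range (Fgen (K := K) ll n p)).toFinset.card ≤
        Fintype.card ((Σ k : Fin p, List.Vector (Fin 2) k) ×
          (Σ k : Fin (p+1), List.Vector (Fin 2) k) × (Fin d → Fin (n+1))) := by
      rw [Set.toFinset_range]
      exact le_trans Finset.card_image_le (le_of_eq (Finset.card_univ))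
    have h3 : Fintype.card ((Σ k : Fin p, List.Vector (Fin 2) k) ×
          (Σ k : Fin (p+1), List.Vector (Fin 2) k) × (Fin d → Fin (n+1)))
        = (∑ k : Fin p, 2 ^ (k : ℕ)) * ((∑ k : Fin (p+1), 2 ^ (k : ℕ)) * (n+1)^d) := by
      simp [Fintype.card_sigma, card_vector, Fintype.card_fun]
    have h4 : (∑ k : Fin p, 2 ^ (k : ℕ)) * ((∑ k : Fin (p+1), 2 ^ (k : ℕ)) * (n+1)^d)
        ≤ 2^p * (2^(p+1) * (n+1)^d) :=
      Nat.mul_le_mul (sum_two_pow_le p)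
        (Nat.mul_le_mul (sum_two_pow_le (p+1)) le_rfl)
    have h5 : 2^p * (2^(p+1) * (n+1)^d) = (n+1)^d * 2 * 4^p := by
      rw [show (4:ℕ) = 2^2 from rfl, ← pow_mul]
      ring
    have h6 : (n+1)^d * 2 * 4^p ≤ (n + 1) ^ d * (2 * p ^ 2) * 4 ^ p := by
      have hp2 : 1 ≤ p^2 := pow_pos hp 2
      have : (n+1)^d * 2 ≤ (n+1)^d * (2 * p^2) := by
        apply Nat.mul_le_mul_left
        omega
      exact Nat.mul_le_mul this le_rfl
    omega
  · -- main containment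
    intro j hj
    rw [Submodule.span_le]
    rintro a ⟨u, v, y, hy, rfl⟩
    obtain ⟨α, hα⟩ := (Submodule.mem_span_range_iff_exists_fun K).mp hy
    have hyw : y = ∑ i, α i • wordOf K (ll i) := by
      rw [← hα]
      exact Finset.sum_congr rfl (fun i _ => by rw [hw])
    have hy' : y ^ j = ∑ μ ∈ Finset.univ.image
          (fun f : Fin j → Fin d => (↑(List.ofFn f) : Multiset (Fin d))),
        ((μ.map α).prod) • Sym ll μ := by
      rw [hyw, pow_expand_sym]
    have hex : ∀ m : ℕ, ∃ k t : ℕ, t < n ∧ m + t = k * n := by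
      intro m
      induction m with
      | zero => exact ⟨0, 0, hn, by simp⟩
      | succ m ih =>
          obtain ⟨k, t, htn, he⟩ := ih
          rcases Nat.eq_zero_or_pos t with h0 | hpos
          · refine ⟨k + 1, n - 1, by omega, ?_⟩
            have h1 : (k + 1) * n = k * n + n := by ring
            omega
          · exact ⟨k, t - 1, by omega, by omega⟩
    have hword_case : ∀ lu : List (Fin 2), wordOf K lu * (y ^ j * v) ∈
        ⨆ k : ℕ, Aspan K (k * n) * Y * (⊤ : Submodule K (FA K)) := by
      intro lu
      obtain ⟨k, t, htn, hkt⟩ := hex lu.length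
      rw [← mul_assoc, hy', Finset.mul_sum, Finset.sum_mul]
      apply Submodule.sum_mem
      intro μ hμim
      have hcard : Multiset.card μ = j := by
        obtain ⟨f, -, rfl⟩ := Finset.mem_image.mp hμim
        rw [Multiset.coe_card, List.length_ofFn]
      have hwtμ : n + t ≤ wt ll μ := by
        have h1 := wt_ge_card ll hne μ
        omega
      have hmem := claimA ll n p hp hpn hlen hne Y hY t t le_rfl htn lu k hkt μ hwtμ v
      rw [mul_smul_comm, smul_mul_assoc]
      exact Submodule.smul_mem _ _ hmem
    have hu : u ∈ Submodule.span K {a : FA K | ∃ lu, a = wordOf K lu} :=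
      (span_words_top (K := K)) ▸ Submodule.mem_top
    rw [mul_assoc]
    refine Submodule.span_induction
      (p := fun x _ => x * (y ^ j * v) ∈
        ⨆ k : ℕ, Aspan K (k * n) * Y * (⊤ : Submodule K (FA K))) ?_ ?_ ?_ ?_ hu
    · rintro x ⟨lu, rfl⟩
      exact hword_case lu
    · show (0 : FA K) * (y ^ j * v) ∈ _
      rw [zero_mul]; exact Submodule.zero_mem _
    · intro x y' _ _ ihx ihy
      show (x + y') * (y ^ j * v) ∈ _
      rw [add_mul]; exact Submodule.add_mem _ ihx ihy
    · intro a x _ ih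
      show (a • x) * (y ^ j * v) ∈ _
      rw [smul_mul_assoc]; exact Submodule.smul_mem _ _ ih


end
end
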